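/- Let k ≥ 0 and let w be a polynomial vector field on ℝ³ with components of total degree at most k satisfying div w = 0. Then there exists a polynomial vector field u with components of total degree at most k+1 such that w = curl u. -/

import Mathlib

open MvPolynomial

/-- Polynomials on ℝ³. -/
abbrev RP3 := MvPolynomial (Fin 3) ℝ

/-- Curl of a polynomial vector field on ℝ³. -/
noncomputable def pcurl (v : Fin 3 → RP3) : Fin 3 → RP3 :=
  ![pderiv 1 (v 2) - pderiv 2 (v 1),
    pderiv 2 (v 0) - pderiv 0 (v 2),
    pderiv 0 (v 1) - pderiv 1 (v 0)]

/-- Divergence of a polynomial vector field on ℝ³. -/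
noncomputable def pdiv (v : Fin 3 → RP3) : RP3 := ∑ i, pderiv i (v i)

noncomputable def mop (g : (Fin 3 →₀ ℕ) → RP3) (p : RP3) : RP3 :=
  ∑ m ∈ p.support, coeff m p • g m

lemma mop_eq_sum (g : (Fin 3 →₀ ℕ) → RP3) (p : RP3) {s : Finset (Fin 3 →₀ ℕ)}
    (hs : p.support ⊆ s) : mop g p = ∑ m ∈ s, coeff m p • g m := by
  refine Finset.sum_subset hs fun m _ hm => ?_
  rw [MvPolynomial.notMem_support_iff.mp hm, zero_smul]

lemma mop_add (g : (Fin 3 →₀ ℕ) → RP3) (p q : RP3) :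
    mop g (p + q) = mop g p + mop g q := by
  classical
  rw [mop_eq_sum g (p+q) (s := p.support ∪ q.support ∪ (p+q).support) (by intro x hx; simp [hx]),
      mop_eq_sum g p (s := p.support ∪ q.support ∪ (p+q).support) (by intro x hx; simp [hx]),
      mop_eq_sum g q (s := p.support ∪ q.support ∪ (p+q).support) (by intro x hx; simp [hx]),
      ← Finset.sum_add_distrib]
  refine Finset.sum_congr rfl fun m _ => ?_
  rw [coeff_add, add_smul]

lemma mop_neg (g : (Fin 3 →₀ ℕ) → RP3) (p : RP3) : mop g (-p) = - mop g p := by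
  unfold mop
  rw [MvPolynomial.support_neg, ← Finset.sum_neg_distrib]
  exact Finset.sum_congr rfl fun m _ => by rw [coeff_neg, neg_smul]

lemma mop_sub (g : (Fin 3 →₀ ℕ) → RP3) (p q : RP3) :
    mop g (p - q) = mop g p - mop g q := by
  rw [sub_eq_add_neg, mop_add, mop_neg, sub_eq_add_neg]

lemma mop_monomial (g : (Fin 3 →₀ ℕ) → RP3) (m : Fin 3 →₀ ℕ) (a : ℝ) :
    mop g (monomial m a) = a • g m := by
  classical
  by_cases ha : a = 0
  · simp [mop, ha]
  · rw [mop, support_monomial, if_neg ha, Finset.sum_singleton, coeff_monomial, if_pos rfl]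

/-- antiderivative in variable i -/
noncomputable def anti (i : Fin 3) (p : RP3) : RP3 :=
  mop (fun m => monomial (m + Finsupp.single i 1) (((m i : ℝ) + 1)⁻¹)) p

/-- evaluation at xᵢ = 0 -/
noncomputable def ev0 (i : Fin 3) (p : RP3) : RP3 :=
  mop (fun m => if m i = 0 then monomial m 1 else 0) p

lemma anti_add (i : Fin 3) (p q : RP3) : anti i (p + q) = anti i p + anti i q := mop_add _ _ _
lemma anti_neg (i : Fin 3) (p : RP3) : anti i (-p) = - anti i p := mop_neg _ _
lemma anti_sub (i : Fin 3) (p q : RP3) : anti i (p - q) = anti i p - anti i q := mop_sub _ _ _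
lemma ev0_add (i : Fin 3) (p q : RP3) : ev0 i (p + q) = ev0 i p + ev0 i q := mop_add _ _ _

lemma anti_monomial (i : Fin 3) (m : Fin 3 →₀ ℕ) (a : ℝ) :
    anti i (monomial m a) = monomial (m + Finsupp.single i 1) (a * ((m i : ℝ) + 1)⁻¹) := by
  rw [anti, mop_monomial, smul_monomial, smul_eq_mul]

lemma ev0_monomial (i : Fin 3) (m : Fin 3 →₀ ℕ) (a : ℝ) :
    ev0 i (monomial m a) = if m i = 0 then monomial m a else 0 := by
  rw [ev0, mop_monomial]
  split <;> simp [smul_monomial]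

lemma pderiv_anti_self (i : Fin 3) (p : RP3) : pderiv i (anti i p) = p := by
  induction p using MvPolynomial.induction_on' with
  | monomial m a =>
    rw [anti_monomial, pderiv_monomial]
    have h1 : (m + Finsupp.single i 1 : Fin 3 →₀ ℕ) i = m i + 1 := by simp
    have h2 : m + Finsupp.single i 1 - Finsupp.single i 1 = m := by
      ext x
      simp only [Finsupp.tsub_apply, Finsupp.add_apply, Finsupp.single_apply]
      split <;> omega
    rw [h1, h2]
    congr 1
    have hne : ((m i : ℝ) + 1) ≠ 0 := by positivity
    push_cast
    field_simp
  | add p q hp hq => rw [anti_add, map_add, hp, hq]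

lemma pderiv_anti_comm {i j : Fin 3} (h : j ≠ i) (p : RP3) :
    pderiv j (anti i p) = anti i (pderiv j p) := by
  induction p using MvPolynomial.induction_on' with
  | monomial m a =>
    rw [anti_monomial, pderiv_monomial, pderiv_monomial, anti_monomial]
    have h1 : (m + Finsupp.single i 1 : Fin 3 →₀ ℕ) j = m j := by
      simp [Finsupp.single_apply, h.symm]
    have h2 : (m - Finsupp.single j 1 : Fin 3 →₀ ℕ) i = m i := by
      simp [Finsupp.tsub_apply, Finsupp.single_apply, h]
    have h3 : m + Finsupp.single i 1 - Finsupp.single j 1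
        = m - Finsupp.single j 1 + Finsupp.single i 1 := by
      ext x
      simp only [Finsupp.tsub_apply, Finsupp.add_apply, Finsupp.single_apply]
      by_cases hi : i = x <;> by_cases hj : j = x <;> simp [hi, hj]
      exact absurd (hj.trans hi.symm) h
    rw [h1, h2, h3]
    ring_nf
  | add p q hp hq => rw [anti_add, map_add, map_add, hp, hq, anti_add]

lemma ftc (i : Fin 3) (p : RP3) : anti i (pderiv i p) = p - ev0 i p := by
  induction p using MvPolynomial.induction_on' with
  | monomial m a =>
    rw [pderiv_monomial, anti_monomial, ev0_monomial]
    by_cases hm : m i = 0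
    · rw [hm, if_pos rfl]
      simp
    · rw [if_neg hm, sub_zero]
      have h2 : (m - Finsupp.single i 1 : Fin 3 →₀ ℕ) i = m i - 1 := by
        simp [Finsupp.tsub_apply]
      have h3 : m - Finsupp.single i 1 + Finsupp.single i 1 = m := by
        ext x
        simp only [Finsupp.tsub_apply, Finsupp.add_apply, Finsupp.single_apply]
        by_cases hx : i = x
        · subst hx; simp; omega
        · simp [hx]
      rw [h2, h3]
      congr 1
      have hc : ((m i - 1 : ℕ) : ℝ) + 1 = (m i : ℝ) := by
        rw [Nat.cast_sub (Nat.one_le_iff_ne_zero.mpr hm)]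
        push_cast; ring
      have hne : (m i : ℝ) ≠ 0 := Nat.cast_ne_zero.mpr hm
      rw [hc]
      field_simp
  | add p q hp hq =>
    rw [map_add, anti_add, hp, hq, ev0_add]
    ring

lemma pderiv_ev0_self (i : Fin 3) (p : RP3) : pderiv i (ev0 i p) = 0 := by
  induction p using MvPolynomial.induction_on' with
  | monomial m a =>
    rw [ev0_monomial]
    split
    · rename_i hm
      rw [pderiv_monomial, hm]
      simp
    · simp
  | add p q hp hq => rw [ev0_add, map_add, hp, hq, add_zero]

lemma anti_zero (i : Fin 3) : anti i 0 = 0 := by simp [anti, mop]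

lemma totalDegree_anti (i : Fin 3) (p : RP3) :
    (anti i p).totalDegree ≤ p.totalDegree + 1 := by
  refine (totalDegree_finset_sum _ _).trans (Finset.sup_le fun m hm => ?_)
  rw [smul_monomial]
  refine (totalDegree_monomial_le _ _).trans ?_
  rw [Finsupp.sum_add_index' (fun _ => rfl) (fun _ _ _ => rfl),
    Finsupp.sum_single_index rfl]
  exact add_le_add_left (le_totalDegree hm) 1

lemma totalDegree_ev0 (i : Fin 3) (p : RP3) :
    (ev0 i p).totalDegree ≤ p.totalDegree := by
  refine (totalDegree_finset_sum _ _).trans (Finset.sup_le fun m hm => ?_)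
  simp only
  split
  · rw [smul_monomial]
    exact (totalDegree_monomial_le _ _).trans (le_totalDegree hm)
  · simp

lemma totalDegree_sub_le' (p q : RP3) :
    (p - q).totalDegree ≤ max p.totalDegree q.totalDegree := by
  rw [sub_eq_add_neg]
  refine (totalDegree_add _ _).trans ?_
  rw [totalDegree_neg]

set_option maxHeartbeats 1000000 in
/-- Polynomial Poincaré lemma for the curl–div segment: a divergence-free
polynomial vector field of degree at most `k` is the curl of a polynomial
vector field of degree at most `k + 1`. -/
theorem poly_poincare_curl_div (k : ℕ) (w : Fin 3 → RP3)
    (hdeg : ∀ i, (w i).totalDegree ≤ k) (hdiv : pdiv w = 0) :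
    ∃ u : Fin 3 → RP3, (∀ i, (u i).totalDegree ≤ k + 1) ∧ w = pcurl u := by
  have hdiv' : pderiv 0 (w 0) + pderiv 1 (w 1) = -(pderiv 2 (w 2)) := by
    have h := hdiv
    rw [pdiv, Fin.sum_univ_three] at h
    linear_combination h
  obtain ⟨u0, hu0d, hu0a, hu0b⟩ : ∃ u0 : RP3, u0.totalDegree ≤ k + 1 ∧
      pderiv 2 u0 = w 1 ∧ pderiv 1 u0 = anti 2 (pderiv 1 (w 1)) - ev0 2 (w 2) := by
    refine ⟨anti 2 (w 1) - anti 1 (ev0 2 (w 2)), ?_, ?_, ?_⟩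
    · refine (totalDegree_sub_le' _ _).trans (max_le ?_ ?_)
      · exact (totalDegree_anti _ _).trans (add_le_add_left (hdeg 1) 1)
      · refine (totalDegree_anti _ _).trans (add_le_add_left ?_ 1)
        exact (totalDegree_ev0 _ _).trans (hdeg 2)
    · rw [map_sub, pderiv_anti_self, pderiv_anti_comm (by decide) (ev0 2 (w 2)),
        pderiv_ev0_self, anti_zero, sub_zero]
    · rw [map_sub, pderiv_anti_comm (by decide) (w 1), pderiv_anti_self]
  obtain ⟨u1, hu1d, hu1a, hu1b⟩ : ∃ u1 : RP3, u1.totalDegree ≤ k + 1 ∧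
      pderiv 2 u1 = -(w 0) ∧ pderiv 0 u1 = -(anti 2 (pderiv 0 (w 0))) := by
    refine ⟨-(anti 2 (w 0)), ?_, ?_, ?_⟩
    · rw [totalDegree_neg]
      exact (totalDegree_anti _ _).trans (add_le_add_left (hdeg 0) 1)
    · rw [map_neg, pderiv_anti_self]
    · rw [map_neg, pderiv_anti_comm (by decide) (w 0)]
  refine ⟨![u0, u1, 0], ?_, ?_⟩
  · intro i
    fin_cases i
    · simpa using hu0d
    · simpa using hu1d
    · simp
  · have c0 : pcurl ![u0, u1, 0] 0 = w 0 := by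
      show pderiv 1 (0 : RP3) - pderiv 2 u1 = w 0
      rw [map_zero, hu1a]; ring
    have c1 : pcurl ![u0, u1, 0] 1 = w 1 := by
      show pderiv 2 u0 - pderiv 0 (0 : RP3) = w 1
      rw [map_zero, hu0a]; ring
    have c2 : pcurl ![u0, u1, 0] 2 = w 2 := by
      show pderiv 0 u1 - pderiv 1 u0 = w 2
      rw [hu1b, hu0b]
      have hftc := ftc 2 (w 2)
      have h5 : anti 2 (pderiv 0 (w 0)) + anti 2 (pderiv 1 (w 1))
          = anti 2 (-(pderiv 2 (w 2))) := by
        rw [← anti_add, hdiv']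
      rw [anti_neg, hftc] at h5
      linear_combination -h5
    funext i
    fin_cases i
    · exact c0.symm
    · exact c1.symm
    · exact c2.symm
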